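/- arXiv:math/0310214 — 7 statements merged into one kernel-verified Lean document; each statement's English description precedes it below -/
import Mathlib

section
/- Let G be a compact abelian topological group with a continuous length function l, and let (H_n)_{n∈ℕ} be a sequence of closed subgroups of G converging to G for the Hausdorff distance associated to the metric d_l. Let F be a finite set of continuous characters of G. Then there exists N ∈ ℕ such that for all n ≥ N, the restriction map to H_n is injective on F: for all χ, χ' ∈ F, if χ(h) = χ'(h) for every h ∈ H_n, then χ = χ'. -/
/-- If closed subgroups `Hₙ` of a compact abelian group `G` converge to `G`
for the Hausdorff distance of a continuous length function `l`, and `F` is a finite set of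
continuous characters of `G`, then for `n` large enough the restriction map to `Hₙ` is
injective on `F`. -/
theorem stmt_4 {G : Type*} [CommGroup G] [TopologicalSpace G] [IsTopologicalGroup G]
    [CompactSpace G] (l : G → ℝ) (hcont : Continuous l)
    (hzero : ∀ g : G, l g = 0 ↔ g = 1)
    (hinv : ∀ g : G, l g⁻¹ = l g)
    (hsub : ∀ g h : G, l (g * h) ≤ l g + l h)
    (H : ℕ → Subgroup G) (hHclosed : ∀ n, IsClosed ((H n : Set G)))
    (hHconv : ∀ ε > (0 : ℝ), ∃ N : ℕ, ∀ n ≥ N, ∀ g : G, ∃ x ∈ H n, l (x⁻¹ * g) < ε)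
    (F : Set (G →* ℂ)) (hFfin : F.Finite)
    (hFcont : ∀ χ ∈ F, Continuous χ)
    (hFmod : ∀ χ ∈ F, ∀ g : G, ‖χ g‖ = 1) :
    ∃ N : ℕ, ∀ n ≥ N, ∀ χ ∈ F, ∀ χ' ∈ F, (∀ h ∈ H n, χ h = χ' h) → χ = χ' := by
  classical
  have hnonneg : ∀ g : G, 0 ≤ l g := by
    intro g
    have h1 : l (g * g⁻¹) ≤ l g + l g⁻¹ := hsub g g⁻¹
    rw [mul_inv_cancel, hinv] at h1
    have h2 : l (1 : G) = 0 := (hzero 1).mpr rfl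
    linarith
  have hpair : ∀ χ ∈ F, ∀ χ' ∈ F, ∃ N, ∀ n ≥ N,
      (∀ h ∈ H n, χ h = χ' h) → χ = χ' := by
    intro χ hχ χ' hχ'
    by_cases hne : χ = χ'
    · exact ⟨0, fun n _ _ => hne⟩
    · obtain ⟨g₀, hg₀⟩ : ∃ g₀, χ g₀ ≠ χ' g₀ := by
        by_contra h
        push_neg at h
        exact hne (MonoidHom.ext h)
      set c := ‖χ g₀ - χ' g₀‖ with hc
      have hcpos : 0 < c := by
        rw [hc]
        exact norm_pos_iff.mpr (sub_ne_zero.mpr hg₀)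
      set K := {g : G | c ≤ ‖χ g - χ' g‖} with hK
      have hKclosed : IsClosed K :=
        isClosed_le continuous_const
          (continuous_norm.comp ((hFcont χ hχ).sub (hFcont χ' hχ')))
      obtain ⟨z, hzK, hzmin⟩ :=
        hKclosed.isCompact.exists_isMinOn ⟨g₀, le_refl c⟩ hcont.continuousOn
      have hz1 : z ≠ 1 := by
        intro hz
        have : c ≤ ‖χ (1 : G) - χ' (1 : G)‖ := hz ▸ hzK
        simp at this
        linarith
      have hzpos : 0 < l z :=
        lt_of_le_of_ne (hnonneg z) (fun h => hz1 ((hzero z).mp h.symm))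
      obtain ⟨N, hN⟩ := hHconv (l z) hzpos
      refine ⟨N, fun n hn hagree => ?_⟩
      obtain ⟨x, hxH, hx⟩ := hN n hn g₀
      have hxx : χ x = χ' x := hagree x hxH
      have key : c ≤ ‖χ (x⁻¹ * g₀) - χ' (x⁻¹ * g₀)‖ := by
        have heq : χ g₀ - χ' g₀ = χ' x * (χ (x⁻¹ * g₀) - χ' (x⁻¹ * g₀)) := by
          have h1 : χ g₀ = χ x * χ (x⁻¹ * g₀) := by rw [← map_mul, mul_inv_cancel_left]
          have h2 : χ' g₀ = χ' x * χ' (x⁻¹ * g₀) := by rw [← map_mul, mul_inv_cancel_left]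
          rw [h1, h2, hxx, mul_sub]
        rw [hc, heq, norm_mul, hFmod χ' hχ' x, one_mul]
      have hmem : (x⁻¹ * g₀) ∈ K := key
      have := hzmin hmem
      simp only [Set.mem_setOf_eq] at this
      exact absurd hx (not_lt.mpr this)
  choose! Nf hNf using hpair
  refine ⟨hFfin.toFinset.sup (fun χ => hFfin.toFinset.sup (Nf χ)),
    fun n hn χ hχ χ' hχ' hag => ?_⟩
  refine hNf χ hχ χ' hχ' n ?_ hag
  calc Nf χ χ' ≤ hFfin.toFinset.sup (Nf χ) :=
        Finset.le_sup (hFfin.mem_toFinset.mpr hχ')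
    _ ≤ hFfin.toFinset.sup (fun χ => hFfin.toFinset.sup (Nf χ)) :=
        Finset.le_sup (f := fun χ => hFfin.toFinset.sup (Nf χ))
          (hFfin.mem_toFinset.mpr hχ)
    _ ≤ n := hn
end

section
/- Let G be a compact abelian topological group with a continuous length function l, and let (H_n)_{n∈ℕ} be a sequence of closed subgroups of G converging to G for the Hausdorff distance associated to the metric d_l. Let χ be a continuous character of G and suppose there exists a strictly increasing function f : ℕ → ℕ such that χ(h) = 1 for every n ∈ ℕ and every h ∈ H_{f(n)}. Then χ is the trivial character, i.e., χ(g) = 1 for all g ∈ G. -/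
/-- If closed subgroups `Hₙ` of a compact abelian group `G` converge to `G`
for the Hausdorff distance of a continuous length function `l`, and a continuous character
`χ` of `G` is identically `1` on the subgroups `H (f n)` along a strictly increasing
sequence `f`, then `χ` is the trivial character. -/
theorem stmt_5 {G : Type*} [CommGroup G] [TopologicalSpace G] [IsTopologicalGroup G]
    [CompactSpace G] (l : G → ℝ) (hcont : Continuous l)
    (hzero : ∀ g : G, l g = 0 ↔ g = 1)
    (hinv : ∀ g : G, l g⁻¹ = l g)
    (hsub : ∀ g h : G, l (g * h) ≤ l g + l h)
    (H : ℕ → Subgroup G) (hHclosed : ∀ n, IsClosed ((H n : Set G)))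
    (hHconv : ∀ ε > (0 : ℝ), ∃ N : ℕ, ∀ n ≥ N, ∀ g : G, ∃ x ∈ H n, l (x⁻¹ * g) < ε)
    (χ : G →* ℂ) (hχcont : Continuous χ)
    (hχmod : ∀ g : G, ‖χ g‖ = 1)
    (f : ℕ → ℕ) (hf : StrictMono f)
    (hχ1 : ∀ n : ℕ, ∀ h ∈ H (f n), χ h = 1) :
    ∀ g : G, χ g = 1 := by
  have hl1 : l 1 = 0 := (hzero 1).mpr rfl
  have hnn : ∀ g : G, 0 ≤ l g := by
    intro g
    have h := hsub g g⁻¹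
    rw [mul_inv_cancel, hl1, hinv] at h
    linarith
  intro g
  have key : ∀ ε > (0 : ℝ), ‖χ g - 1‖ < ε := by
    intro ε hε
    have hU : IsOpen {y : G | ‖χ y - 1‖ < ε} :=
      isOpen_lt (by fun_prop) continuous_const
    obtain ⟨δ, hδ, hδU⟩ : ∃ δ > (0 : ℝ), ∀ y : G, l y < δ → ‖χ y - 1‖ < ε := by
      by_cases hK : ({y : G | ‖χ y - 1‖ < ε}ᶜ : Set G).Nonempty
      · have hKc : IsCompact ({y : G | ‖χ y - 1‖ < ε}ᶜ : Set G) :=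
          hU.isClosed_compl.isCompact
        obtain ⟨y₀, hy₀, hmin⟩ := hKc.exists_isMinOn hK hcont.continuousOn
        refine ⟨l y₀, ?_, ?_⟩
        · rcases (hnn y₀).lt_or_eq with h | h
          · exact h
          · exfalso
            have hy1 : y₀ = 1 := (hzero y₀).mp h.symm
            apply hy₀
            simp only [Set.mem_setOf_eq, hy1, map_one, sub_self, norm_zero]
            exact hε
        · intro y hy
          by_contra hc
          have hyK : y ∈ ({y : G | ‖χ y - 1‖ < ε}ᶜ : Set G) := hc
          have := hmin hyK
          simp only [Set.mem_setOf_eq] at this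
          linarith
      · refine ⟨1, one_pos, fun y _ => ?_⟩
        by_contra h
        exact hK ⟨y, h⟩
    obtain ⟨N, hN⟩ := hHconv δ hδ
    obtain ⟨x, hx, hlx⟩ := hN (f N) hf.le_apply g
    have hχx : χ x⁻¹ = 1 := hχ1 N x⁻¹ (inv_mem hx)
    have hmul : χ (x⁻¹ * g) = χ g := by rw [map_mul, hχx, one_mul]
    calc ‖χ g - 1‖ = ‖χ (x⁻¹ * g) - 1‖ := by rw [hmul]
      _ < ε := hδU _ hlx
  by_contra h
  have h0 : 0 < ‖χ g - 1‖ := norm_pos_iff.mpr (sub_ne_zero.mpr h)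
  exact lt_irrefl _ (key _ h0)
end

section
/- Let G be a compact abelian topological group with a continuous length function l and Haar probability measure λ, and let (H_n)_{n∈ℕ} be a sequence of closed subgroups of G converging to G for the Hausdorff distance associated to the metric d_l. For each n let λ_n denote the Haar probability measure of the compact group H_n. Then for every continuous function f : G → ℝ, the integrals ∫_{H_n} f(h) dλ_n(h) converge to ∫_G f dλ as n → ∞; equivalently, the pushforwards to G of the measures λ_n converge weakly to λ. -/
open MeasureTheory

/-- If closed subgroups `Hₙ` of a compact abelian group `G` (with Haar
probability measure `μ`) converge to `G` for the Hausdorff distance of a continuous length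
function `l`, and `λₙ` denotes the Haar probability measure of `Hₙ`, then for every
continuous `f : G → ℝ` the integrals `∫_{Hₙ} f dλₙ` converge to `∫_G f dμ`. -/
theorem stmt_6 {G : Type*} [CommGroup G] [TopologicalSpace G] [IsTopologicalGroup G]
    [CompactSpace G] [MeasurableSpace G] [BorelSpace G]
    (l : G → ℝ) (hcont : Continuous l)
    (hzero : ∀ g : G, l g = 0 ↔ g = 1)
    (hinv : ∀ g : G, l g⁻¹ = l g)
    (hsub : ∀ g h : G, l (g * h) ≤ l g + l h)
    (μ : Measure G) [IsProbabilityMeasure μ] [μ.IsMulLeftInvariant]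
    (H : ℕ → Subgroup G) (hHclosed : ∀ n, IsClosed ((H n : Set G)))
    (hHconv : ∀ ε > (0 : ℝ), ∃ N : ℕ, ∀ n ≥ N, ∀ g : G, ∃ x ∈ H n, l (x⁻¹ * g) < ε)
    (lam : (n : ℕ) → Measure (H n))
    (hprob : ∀ n, IsProbabilityMeasure (lam n))
    (hlaminv : ∀ n, ∀ h : H n, (lam n).map (fun x => h * x) = lam n) :
    ∀ f : G → ℝ, Continuous f →
      Filter.Tendsto (fun n => ∫ h : H n, f ↑h ∂(lam n)) Filter.atTop
        (nhds (∫ g, f g ∂μ)) := by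
  intro f hf
  -- nonnegativity of the length function
  have lnonneg : ∀ g : G, 0 ≤ l g := by
    intro g
    have h := hsub g g⁻¹
    rw [mul_inv_cancel, (hzero 1).mpr rfl, hinv] at h
    linarith
  -- uniform continuity of f with respect to the length function
  have key : ∀ ε > (0 : ℝ), ∃ δ > (0 : ℝ), ∀ u v : G, l (u⁻¹ * v) < δ → |f u - f v| < ε := by
    intro ε hε
    set K : Set (G × G) := {p | ε ≤ |f p.1 - f p.2|} with hK
    have hKcl : IsClosed K := by
      apply isClosed_le continuous_const
      exact ((hf.comp continuous_fst).sub (hf.comp continuous_snd)).abs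
    by_cases hKne : K.Nonempty
    · have hKc : IsCompact K := hKcl.isCompact
      have hlc : Continuous (fun p : G × G => l (p.1⁻¹ * p.2)) :=
        hcont.comp ((continuous_fst.inv).mul continuous_snd)
      obtain ⟨p, hpK, hpmin⟩ := hKc.exists_isMinOn hKne hlc.continuousOn
      refine ⟨l (p.1⁻¹ * p.2), ?_, ?_⟩
      · rcases lt_or_eq_of_le (lnonneg (p.1⁻¹ * p.2)) with h | h
        · exact h
        · exfalso
          have : p.1⁻¹ * p.2 = 1 := (hzero _).mp h.symm
          have hpq : p.1 = p.2 := by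
            have := inv_mul_eq_one.mp this
            exact this
          have : ε ≤ |f p.1 - f p.2| := hpK
          rw [hpq, sub_self, abs_zero] at this
          linarith
      · intro u v huv
        by_contra hcon
        push_neg at hcon
        have huvK : (u, v) ∈ K := by
          simp only [hK, Set.mem_setOf_eq]
          exact hcon
        exact absurd (hpmin huvK) (not_le.mpr huv)
    · refine ⟨1, one_pos, fun u v _ => ?_⟩
      by_contra hcon
      push_neg at hcon
      exact hKne ⟨(u, v), hcon⟩
  -- preparation
  rw [Metric.tendsto_atTop]
  intro ε hε
  obtain ⟨δ, hδ, hδf⟩ := key (ε / 3) (by linarith)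
  obtain ⟨N, hN⟩ := hHconv δ hδ
  refine ⟨N, fun n hn => ?_⟩
  haveI hHcs : CompactSpace (H n) :=
    isCompact_iff_compactSpace.mp (hHclosed n).isCompact
  haveI : BorelSpace (H n) := Subtype.borelSpace _
  haveI := hprob n
  haveI : IsFiniteMeasureOnCompacts (lam n) := ⟨fun _ _ => measure_lt_top _ _⟩
  haveI : IsFiniteMeasureOnCompacts μ := ⟨fun _ _ => measure_lt_top _ _⟩
  -- integrability of various continuous functions
  have hint : ∀ x : G, Integrable (fun h : H n => f (↑h * x)) (lam n) := by
    intro x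
    refine Continuous.integrable_of_hasCompactSupport ?_ (HasCompactSupport.of_compactSpace _)
    exact hf.comp ((continuous_subtype_val).mul continuous_const)
  have hint1 : Integrable (fun h : H n => f ↑h) (lam n) := by
    refine Continuous.integrable_of_hasCompactSupport ?_ (HasCompactSupport.of_compactSpace _)
    exact hf.comp continuous_subtype_val
  -- pointwise estimate : for every x, the averages of f(h*x) and f(h) over Hₙ are close
  have hpoint : ∀ x : G,
      |(∫ h : H n, f ↑h ∂(lam n)) - ∫ h : H n, f (↑h * x) ∂(lam n)| ≤ ε / 3 := by
    intro x
    obtain ⟨y, hyH, hy⟩ := hN n hn x⁻¹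
    set Y : H n := ⟨y, hyH⟩ with hYdef
    -- translate by Y using invariance of lam n
    have htrans : (∫ h : H n, f (↑h * x) ∂(lam n))
        = ∫ h : H n, f (↑(Y * h) * x) ∂(lam n) := by
      conv_lhs => rw [← hlaminv n Y]
      rw [integral_map]
      · exact (continuous_const.mul continuous_id).measurable.aemeasurable
      · exact (hf.comp ((continuous_subtype_val).mul continuous_const)).aestronglyMeasurable
    rw [htrans]
    rw [← integral_sub hint1]
    · have hb : ∀ h : H n, ‖f ↑h - f (↑(Y * h) * x)‖ ≤ ε / 3 := by
        intro h
        have harg : (↑h : G)⁻¹ * (↑(Y * h) * x) = y * x := by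
          push_cast
          rw [mul_comm y (↑h : G), mul_assoc, inv_mul_cancel_left]
        have hl : l ((↑h : G)⁻¹ * (↑(Y * h) * x)) < δ := by
          rw [harg]
          have : y * x = (y⁻¹ * x⁻¹)⁻¹ := by
            rw [mul_inv, inv_inv, inv_inv, mul_comm]
          rw [this, hinv]
          exact hy
        have := hδf (↑h) (↑(Y * h) * x) hl
        rw [Real.norm_eq_abs]
        exact le_of_lt this
      calc |∫ h : H n, (f ↑h - f (↑(Y * h) * x)) ∂(lam n)|
          ≤ (ε / 3) * ((lam n) Set.univ).toReal :=
            norm_integral_le_of_norm_le_const (Filter.Eventually.of_forall hb)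
        _ = ε / 3 := by simp
    · -- integrability of h ↦ f (↑(Y * h) * x)
      refine Continuous.integrable_of_hasCompactSupport ?_ (HasCompactSupport.of_compactSpace _)
      exact hf.comp (((continuous_const.mul continuous_subtype_val)).mul continuous_const)
  -- the averaged function
  set Gfun : G → ℝ := fun x => ∫ h : H n, f (↑h * x) ∂(lam n) with hGdef
  -- continuity of Gfun
  have hGcont : Continuous Gfun := by
    rw [continuous_iff_continuousAt]
    intro x₀
    rw [ContinuousAt, Metric.tendsto_nhds]
    intro ε' hε'
    obtain ⟨δ', hδ', hδf'⟩ := key (ε' / 2) (by linarith)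
    have hU : {x : G | l (x₀⁻¹ * x) < δ'} ∈ nhds x₀ := by
      apply IsOpen.mem_nhds
      · exact isOpen_lt (hcont.comp (continuous_const.mul continuous_id)) continuous_const
      · simp only [Set.mem_setOf_eq, inv_mul_cancel, (hzero 1).mpr rfl]
        exact hδ'
    filter_upwards [hU] with x hx
    have hdiff : Gfun x - Gfun x₀ = ∫ h : H n, (f (↑h * x) - f (↑h * x₀)) ∂(lam n) := by
      rw [hGdef]
      rw [integral_sub (hint x) (hint x₀)]
    have hb : ∀ h : H n, ‖f (↑h * x) - f (↑h * x₀)‖ ≤ ε' / 2 := by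
      intro h
      have harg : (↑h * x)⁻¹ * (↑h * x₀) = x⁻¹ * x₀ := by
        simp [mul_comm, mul_left_comm, mul_assoc]
      have hl : l ((↑h * x)⁻¹ * (↑h * x₀)) < δ' := by
        rw [harg]
        have : x⁻¹ * x₀ = (x₀⁻¹ * x)⁻¹ := by
          rw [mul_inv, inv_inv]
          exact mul_comm _ _
        rw [this, hinv]
        exact hx
      rw [Real.norm_eq_abs]
      exact le_of_lt (hδf' _ _ hl)
    rw [Real.dist_eq, hdiff]
    calc |∫ h : H n, (f (↑h * x) - f (↑h * x₀)) ∂(lam n)|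
        ≤ (ε' / 2) * ((lam n) Set.univ).toReal :=
          norm_integral_le_of_norm_le_const (Filter.Eventually.of_forall hb)
      _ = ε' / 2 := by simp
      _ < ε' := by linarith
  have hGint : Integrable Gfun μ :=
    hGcont.integrable_of_hasCompactSupport (HasCompactSupport.of_compactSpace _)
  -- Fubini : ∫ Gfun dμ = ∫ f dμ
  have hfub : ∫ x, Gfun x ∂μ = ∫ g, f g ∂μ := by
    have hswap : ∫ h : H n, (∫ x, f (↑h * x) ∂μ) ∂(lam n)
        = ∫ x, (∫ h : H n, f (↑h * x) ∂(lam n)) ∂μ := by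
      apply integral_integral_swap_of_hasCompactSupport
      · exact hf.comp ((continuous_subtype_val.comp continuous_fst).mul continuous_snd)
      · exact HasCompactSupport.of_compactSpace _
    have hconst : ∫ h : H n, (∫ x, f (↑h * x) ∂μ) ∂(lam n) = ∫ g, f g ∂μ := by
      have : ∀ h : H n, (∫ x, f (↑h * x) ∂μ) = ∫ g, f g ∂μ := fun h =>
        integral_mul_left_eq_self f (↑h)
      simp_rw [this]
      simp
    rw [hGdef, ← hswap, hconst]
  -- final estimate
  rw [Real.dist_eq, ← hfub]
  have hconst2 : (∫ h : H n, f ↑h ∂(lam n)) = ∫ x, (∫ h : H n, f ↑h ∂(lam n)) ∂μ := by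
    simp
  rw [hconst2, ← integral_sub (integrable_const _) hGint]
  calc |∫ x, ((∫ h : H n, f ↑h ∂(lam n)) - Gfun x) ∂μ|
      ≤ (ε / 3) * (μ Set.univ).toReal := by
        rw [← Real.norm_eq_abs]
        apply norm_integral_le_of_norm_le_const
        filter_upwards with x
        rw [Real.norm_eq_abs]
        exact hpoint x
    _ = ε / 3 := by simp
    _ < ε := by linarith
end

section
/- Let G be a compact topological group, let H be a closed normal subgroup of G, and let K = G/H be the quotient topological group with quotient map g ↦ [g]. Let (l_n)_{n∈ℕ} be a sequence of continuous length functions on G converging uniformly on G to a function l̃ such that l̃(g) = 0 for every g ∈ H and l̃(g) > 0 for every g ∉ H. Then there exists a continuous length function l_∞ on K such that for every g ∈ G, l_n(g) → l_∞([g]) as n → ∞. -/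
/-- Let `H` be a closed normal subgroup of a compact group `G` and
`K = G ⧸ H`. If continuous length functions `lₙ` on `G` converge uniformly to a function
`l̃` vanishing exactly on `H`, then there is a continuous length function `l∞` on `K` with
`lₙ g → l∞ [g]` for every `g`. -/
theorem stmt_7 {G : Type*} [Group G] [TopologicalSpace G] [IsTopologicalGroup G]
    [CompactSpace G] (H : Subgroup G) [H.Normal] (hHclosed : IsClosed (H : Set G))
    (l : ℕ → G → ℝ) (hcont : ∀ n, Continuous (l n))
    (hzero : ∀ n, ∀ g : G, l n g = 0 ↔ g = 1)
    (hinv : ∀ n, ∀ g : G, l n g⁻¹ = l n g)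
    (hsub : ∀ n, ∀ g h : G, l n (g * h) ≤ l n g + l n h)
    (ltil : G → ℝ) (hunif : TendstoUniformly l ltil Filter.atTop)
    (hzH : ∀ g ∈ H, ltil g = 0) (hposH : ∀ g ∉ H, 0 < ltil g) :
    ∃ linf : G ⧸ H → ℝ, Continuous linf ∧
      (∀ x : G ⧸ H, linf x = 0 ↔ x = 1) ∧
      (∀ x : G ⧸ H, linf x⁻¹ = linf x) ∧
      (∀ x y : G ⧸ H, linf (x * y) ≤ linf x + linf y) ∧
      ∀ g : G, Filter.Tendsto (fun n => l n g) Filter.atTop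
        (nhds (linf (QuotientGroup.mk g))) := by
  have htend : ∀ g : G, Filter.Tendsto (fun n => l n g) Filter.atTop (nhds (ltil g)) :=
    fun g => hunif.tendsto_at g
  have hltcont : Continuous ltil :=
    hunif.continuous (Filter.Eventually.of_forall hcont).frequently
  have hltsub : ∀ g h : G, ltil (g * h) ≤ ltil g + ltil h := by
    intro g h
    exact le_of_tendsto_of_tendsto' (htend (g * h)) ((htend g).add (htend h))
      (fun n => hsub n g h)
  have hltinv : ∀ g : G, ltil g⁻¹ = ltil g := by
    intro g
    refine tendsto_nhds_unique ?_ (htend g)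
    simpa [hinv] using htend g⁻¹
  have hconst : ∀ a b : G, a⁻¹ * b ∈ H → ltil a = ltil b := by
    intro a b hab
    have h1 : ltil b ≤ ltil a := by
      have := hltsub a (a⁻¹ * b)
      rw [mul_inv_cancel_left, hzH _ hab, add_zero] at this
      exact this
    have h2 : ltil a ≤ ltil b := by
      have := hltsub b (b⁻¹ * a)
      rw [mul_inv_cancel_left] at this
      have hba : b⁻¹ * a ∈ H := by
        have := H.inv_mem hab
        simpa [mul_inv_rev] using this
      rw [hzH _ hba, add_zero] at this
      exact this
    exact le_antisymm h2 h1
  refine ⟨fun x => Quotient.liftOn' x ltil (fun a b hab => hconst a b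
    (QuotientGroup.leftRel_apply.mp hab)), ?_, ?_, ?_, ?_, ?_⟩
  · exact hltcont.quotient_liftOn' _
  · intro x
    induction x using QuotientGroup.induction_on with
    | H g =>
      constructor
      · intro h0
        rw [QuotientGroup.eq_one_iff]
        by_contra hg
        exact absurd h0 (ne_of_gt (hposH g hg))
      · intro h1
        exact hzH g ((QuotientGroup.eq_one_iff g).mp h1)
  · intro x
    induction x using QuotientGroup.induction_on with
    | H g => exact hltinv g
  · intro x y
    induction x using QuotientGroup.induction_on with
    | H g =>
      induction y using QuotientGroup.induction_on with
      | H h => exact hltsub g h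
  · intro g
    exact htend g
end

section
/- Let G be a compact topological group, H a closed normal subgroup, K = G/H the quotient topological group, and let (l_n)_{n∈ℕ} be a sequence of continuous length functions on G converging uniformly on G to a function l̃ with l̃(g) = 0 for g ∈ H and l̃(g) > 0 for g ∉ H. For each n define the quotient length function l_n^K on K by l_n^K([g]) = inf{ l_n(gh) : h ∈ H }, and let l_∞ be the function on K determined by l_∞([g]) = l̃(g). Then each l_n^K is continuous on K, and the sequence (l_n^K)_{n∈ℕ} converges uniformly on K to l_∞. -/
/-- With `H` a closed normal subgroup of the compact group `G`, `K = G ⧸ H`,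
continuous length functions `lₙ` converging uniformly to `l̃` which vanishes exactly on `H`,
the quotient length functions `lₙᴷ [g] = inf { lₙ (g h) : h ∈ H }` are continuous on `K` and
converge uniformly on `K` to `l∞`, where `l∞ [g] = l̃ g`. -/
theorem stmt_9 {G : Type*} [Group G] [TopologicalSpace G] [IsTopologicalGroup G]
    [CompactSpace G] (H : Subgroup G) [H.Normal] (hHclosed : IsClosed (H : Set G))
    (l : ℕ → G → ℝ) (hcont : ∀ n, Continuous (l n))
    (hzero : ∀ n, ∀ g : G, l n g = 0 ↔ g = 1)
    (hinv : ∀ n, ∀ g : G, l n g⁻¹ = l n g)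
    (hsub : ∀ n, ∀ g h : G, l n (g * h) ≤ l n g + l n h)
    (ltil : G → ℝ) (hunif : TendstoUniformly l ltil Filter.atTop)
    (hzH : ∀ g ∈ H, ltil g = 0) (hposH : ∀ g ∉ H, 0 < ltil g)
    (lK : ℕ → G ⧸ H → ℝ)
    (hlK : ∀ n, ∀ g : G, lK n (QuotientGroup.mk g) =
      sInf ((fun h : G => l n (g * h)) '' (H : Set G)))
    (linf : G ⧸ H → ℝ)
    (hlinf : ∀ g : G, linf (QuotientGroup.mk g) = ltil g) :
    (∀ n, Continuous (lK n)) ∧ TendstoUniformly lK linf Filter.atTop := by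
  classical
  have h0 : ∀ n, l n (1 : G) = 0 := fun n => (hzero n 1).mpr rfl
  have hnn : ∀ n (g : G), 0 ≤ l n g := by
    intro n g
    have h1 : l n (g * g⁻¹) ≤ l n g + l n g⁻¹ := hsub n g g⁻¹
    rw [mul_inv_cancel, h0, hinv] at h1
    linarith
  -- nonempty and bddBelow of the image sets
  have hne : ∀ n (g : G), ((fun h : G => l n (g * h)) '' (H : Set G)).Nonempty :=
    fun n g => ⟨l n (g * 1), ⟨1, H.one_mem, rfl⟩⟩
  have hbd : ∀ n (g : G), BddBelow ((fun h : G => l n (g * h)) '' (H : Set G)) := by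
    intro n g
    refine ⟨0, ?_⟩
    rintro b ⟨h, hh, rfl⟩
    exact hnn n _
  -- key Lipschitz-type bound
  have key : ∀ n (g g' : G), lK n (QuotientGroup.mk g') ≤ l n (g' * g⁻¹) + lK n (QuotientGroup.mk g) := by
    intro n g g'
    rw [hlK, hlK, ← sub_le_iff_le_add']
    apply le_csInf (hne n g)
    rintro b ⟨h, hh, rfl⟩
    rw [sub_le_iff_le_add']
    calc sInf ((fun h : G => l n (g' * h)) '' (H : Set G)) ≤ l n (g' * h) :=
          csInf_le (hbd n g') ⟨h, hh, rfl⟩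
      _ ≤ l n (g' * g⁻¹) + l n (g * h) := by
          have h2 : g' * h = (g' * g⁻¹) * (g * h) := by group
          rw [h2]; exact hsub n _ _
  constructor
  · intro n
    rw [(QuotientGroup.isQuotientMap_mk H).continuous_iff]
    rw [continuous_iff_continuousAt]
    intro g0
    have habs : ∀ g : G, dist (lK n (QuotientGroup.mk g)) (lK n (QuotientGroup.mk g0))
        ≤ l n (g * g0⁻¹) := by
      intro g
      rw [Real.dist_eq, abs_le]
      constructor
      · have := key n g g0
        have h3 : l n (g0 * g⁻¹) = l n (g * g0⁻¹) := by
          rw [← hinv n (g * g0⁻¹)]; congr 1; group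
        linarith
      · have := key n g0 g
        linarith
    have hlim : Filter.Tendsto (fun g : G => l n (g * g0⁻¹)) (nhds g0) (nhds 0) := by
      have hc : Continuous fun g : G => l n (g * g0⁻¹) :=
        (hcont n).comp (continuous_id.mul continuous_const)
      have := hc.tendsto g0
      simpa [mul_inv_cancel, h0 n] using this
    rw [ContinuousAt, tendsto_iff_dist_tendsto_zero]
    exact squeeze_zero (fun g => dist_nonneg) habs hlim
  · -- uniform convergence
    have hltend : ∀ g : G, Filter.Tendsto (fun n => l n g) Filter.atTop (nhds (ltil g)) :=
      fun g => hunif.tendsto_at g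
    have hsub' : ∀ a b : G, ltil (a * b) ≤ ltil a + ltil b := fun a b =>
      le_of_tendsto_of_tendsto' (hltend (a * b)) ((hltend a).add (hltend b))
        (fun n => hsub n a b)
    have hmono : ∀ (g : G), ∀ h ∈ H, ltil g ≤ ltil (g * h) := by
      intro g h hh
      have h1 : ltil (g * h * h⁻¹) ≤ ltil (g * h) + ltil h⁻¹ := hsub' (g * h) h⁻¹
      rw [mul_inv_cancel_right, hzH h⁻¹ (H.inv_mem hh)] at h1
      linarith
    rw [Metric.tendstoUniformly_iff] at hunif ⊢
    intro ε hε
    filter_upwards [hunif (ε / 2) (by linarith)] with n hn x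
    obtain ⟨g, rfl⟩ := QuotientGroup.mk_surjective x
    rw [hlinf, hlK]
    have hub : sInf ((fun h : G => l n (g * h)) '' (H : Set G)) ≤ l n g := by
      have : l n (g * 1) ∈ (fun h : G => l n (g * h)) '' (H : Set G) := ⟨1, H.one_mem, rfl⟩
      simpa using csInf_le (hbd n g) this
    have hlb : ltil g - ε / 2 ≤ sInf ((fun h : G => l n (g * h)) '' (H : Set G)) := by
      apply le_csInf (hne n g)
      rintro b ⟨h, hh, rfl⟩
      have := hn (g * h)
      rw [Real.dist_eq, abs_lt] at this
      have := hmono g h hh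
      linarith
    have hg := hn g
    rw [Real.dist_eq, abs_lt] at hg ⊢
    constructor <;> linarith
end

section
/- Let A be a complex Banach space, G a compact topological group with identity e acting on A by linear isometries α_g with the action strongly continuous, H a closed normal subgroup of G, and l a continuous length function on G. Define the quotient length function l^K on K = G/H by l^K([g]) = inf{ l(gh) : h ∈ H }. Then for every a in the fixed-point set A^H = { b ∈ A : α_h(b) = b for all h ∈ H }: (i) the quantity ‖a − α_g(a)‖ depends only on the coset [g] of g in K; and (ii) the suprema (taken in [0, ∞]) satisfy sup{ ‖a − α_g(a)‖ / l(g) : g ∈ G, g ≠ e } = sup{ ‖a − α_g(a)‖ / l^K([g]) : [g] ∈ K, [g] ≠ [e] }. -/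
/-- With `G` a compact group acting strongly continuously by linear
isometries on a complex Banach space `A`, `H` a closed normal subgroup, `l` a continuous
length function on `G`, and `lᴷ [g] = inf { l (g h) : h ∈ H }` the quotient length function
on `K = G ⧸ H`: for every `a` in the fixed-point set `A^H`, the quantity `‖a − α g a‖`
only depends on the coset of `g`, and the suprema (in `[0, ∞]`)
`sup_{g ≠ 1} ‖a − α g a‖ / l g` and `sup_{[g] ≠ [1]} ‖a − α g a‖ / lᴷ [g]` coincide. -/
theorem stmt_13 {A : Type*} [NormedAddCommGroup A] [NormedSpace ℂ A] [CompleteSpace A]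
    {G : Type*} [Group G] [TopologicalSpace G] [IsTopologicalGroup G] [CompactSpace G]
    (α : G → A → A)
    (hadd : ∀ g : G, ∀ a b : A, α g (a + b) = α g a + α g b)
    (hsmul : ∀ g : G, ∀ (c : ℂ) (a : A), α g (c • a) = c • α g a)
    (hiso : ∀ g : G, ∀ a : A, ‖α g a‖ = ‖a‖)
    (hone : ∀ a : A, α 1 a = a)
    (hhom : ∀ g h : G, ∀ a : A, α (g * h) a = α g (α h a))
    (hstrong : ∀ a : A, Continuous fun g : G => α g a)
    (H : Subgroup G) [H.Normal] (hHclosed : IsClosed (H : Set G))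
    (l : G → ℝ) (hlcont : Continuous l)
    (hzero : ∀ g : G, l g = 0 ↔ g = 1)
    (hinv : ∀ g : G, l g⁻¹ = l g)
    (hsub : ∀ g h : G, l (g * h) ≤ l g + l h)
    (lK : G ⧸ H → ℝ)
    (hlK : ∀ g : G, lK (QuotientGroup.mk g) = sInf ((fun h : G => l (g * h)) '' (H : Set G))) :
    ∀ a : A, (∀ h ∈ H, α h a = a) →
      (∀ g g' : G, (QuotientGroup.mk g : G ⧸ H) = QuotientGroup.mk g' →
        ‖a - α g a‖ = ‖a - α g' a‖) ∧
      (⨆ (g : G) (_ : g ≠ 1), ENNReal.ofReal ‖a - α g a‖ / ENNReal.ofReal (l g)) =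
        (⨆ (g : G) (_ : (QuotientGroup.mk g : G ⧸ H) ≠ 1),
          ENNReal.ofReal ‖a - α g a‖ / ENNReal.ofReal (lK (QuotientGroup.mk g))) := by
  intro a ha
  have hl0 : ∀ g : G, 0 ≤ l g := by
    intro g
    have h1 : l 1 = 0 := (hzero 1).mpr rfl
    have := hsub g g⁻¹
    rw [mul_inv_cancel, h1, hinv] at this
    linarith
  have key : ∀ g g' : G, (QuotientGroup.mk g : G ⧸ H) = QuotientGroup.mk g' →
      ‖a - α g a‖ = ‖a - α g' a‖ := by
    intro g g' hgg'
    have h1 : g⁻¹ * g' ∈ H := QuotientGroup.eq.mp hgg'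
    have h2 : α g' a = α g a := by
      have h3 := ha _ h1
      calc α g' a = α (g * (g⁻¹ * g')) a := by group
        _ = α g (α (g⁻¹ * g') a) := hhom _ _ _
        _ = α g a := by rw [h3]
    rw [h2]
  refine ⟨key, ?_⟩
  have hHcpt : IsCompact (H : Set G) := hHclosed.isCompact
  have hmin : ∀ g : G, ∃ h ∈ H, lK (QuotientGroup.mk g) = l (g * h) := by
    intro g
    obtain ⟨h, hh, hm⟩ := hHcpt.exists_isMinOn ⟨1, H.one_mem⟩
      ((hlcont.comp (continuous_const.mul continuous_id)).continuousOn :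
        ContinuousOn (fun h : G => l (g * h)) (H : Set G))
    refine ⟨h, hh, ?_⟩
    rw [hlK]
    apply le_antisymm
    · exact csInf_le ⟨0, by rintro x ⟨y, hy, rfl⟩; exact hl0 _⟩ ⟨h, hh, rfl⟩
    · exact le_csInf ⟨_, ⟨h, hh, rfl⟩⟩ (by rintro x ⟨y, hy, rfl⟩; exact hm hy)
  have hlKle : ∀ g : G, lK (QuotientGroup.mk g) ≤ l g := by
    intro g
    rw [hlK]
    have : l g = (fun h : G => l (g * h)) 1 := by simp
    rw [this]
    exact csInf_le ⟨0, by rintro x ⟨y, hy, rfl⟩; exact hl0 _⟩ ⟨1, H.one_mem, rfl⟩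
  apply le_antisymm
  · refine iSup₂_le fun g hg => ?_
    by_cases hgH : (QuotientGroup.mk g : G ⧸ H) = 1
    · have h1 : g ∈ H := (QuotientGroup.eq_one_iff g).mp hgH
      have h2 : α g a = a := ha g h1
      simp [h2]
    · refine le_trans (ENNReal.div_le_div_left (ENNReal.ofReal_le_ofReal (hlKle g)) _) ?_
      exact le_iSup₂_of_le g hgH le_rfl
  · refine iSup₂_le fun g hg => ?_
    obtain ⟨h, hh, hlkeq⟩ := hmin g
    have hmk : (QuotientGroup.mk (g * h) : G ⧸ H) = QuotientGroup.mk g := by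
      apply QuotientGroup.eq.mpr
      simpa using H.inv_mem hh
    have hne : g * h ≠ 1 := by
      intro hc
      apply hg
      rw [← hmk, hc, QuotientGroup.mk_one]
    have hnorm : ‖a - α (g * h) a‖ = ‖a - α g a‖ := key _ _ hmk
    rw [hlkeq, ← hnorm]
    exact le_iSup₂_of_le (g * h) hne le_rfl
end

section
/- Let G₁ and G₂ be compact topological groups and let l be a continuous length function on the product group G₁ × G₂. For each n ∈ ℕ define l_n(ω₁, ω₂) = (1/(n+1)) · l(ω₁, ω₂) + (1 − 1/(n+1)) · l(ω₁, 1). Then: (i) each l_n is a continuous length function on G₁ × G₂; (ii) the sequence (l_n) converges uniformly on G₁ × G₂ to the function l̃(ω₁, ω₂) = l(ω₁, 1), which vanishes exactly on the closed normal subgroup H = {1} × G₂; and (iii) writing l_n^H(ω₁) = inf{ l_n(ω₁, ω₂) : ω₂ ∈ G₂ }, one has sup{ | l(ω₁, 1) / l_n^H(ω₁) − 1 | : ω₁ ∈ G₁, ω₁ ≠ 1 } → 0 as n → ∞. -/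
/-- For compact groups `G₁`, `G₂` and a continuous length function `l` on
`G₁ × G₂`, the functions `lₙ (ω₁, ω₂) = (1/(n+1)) l (ω₁, ω₂) + (1 − 1/(n+1)) l (ω₁, 1)`
are continuous length functions on `G₁ × G₂`, converge uniformly to
`l̃ (ω₁, ω₂) = l (ω₁, 1)` (which vanishes exactly on `H = {1} × G₂`), and the quotient
length functions `lₙᴴ (ω₁) = inf_{ω₂} lₙ (ω₁, ω₂)` satisfy
`sup_{ω₁ ≠ 1} | l (ω₁, 1) / lₙᴴ (ω₁) − 1 | → 0`. -/
theorem stmt_14 {G₁ G₂ : Type*}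
    [Group G₁] [TopologicalSpace G₁] [IsTopologicalGroup G₁] [CompactSpace G₁]
    [Group G₂] [TopologicalSpace G₂] [IsTopologicalGroup G₂] [CompactSpace G₂]
    (l : G₁ × G₂ → ℝ) (hlcont : Continuous l)
    (hzero : ∀ ω : G₁ × G₂, l ω = 0 ↔ ω = 1)
    (hinv : ∀ ω : G₁ × G₂, l ω⁻¹ = l ω)
    (hsub : ∀ ω ω' : G₁ × G₂, l (ω * ω') ≤ l ω + l ω')
    (ln : ℕ → G₁ × G₂ → ℝ)
    (hln : ∀ n : ℕ, ∀ ω : G₁ × G₂,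
      ln n ω = (1 / (n + 1 : ℝ)) * l ω + (1 - 1 / (n + 1 : ℝ)) * l (ω.1, 1)) :
    (∀ n : ℕ, Continuous (ln n) ∧ (∀ ω : G₁ × G₂, ln n ω = 0 ↔ ω = 1) ∧
      (∀ ω : G₁ × G₂, ln n ω⁻¹ = ln n ω) ∧
      (∀ ω ω' : G₁ × G₂, ln n (ω * ω') ≤ ln n ω + ln n ω')) ∧
    (TendstoUniformly ln (fun ω : G₁ × G₂ => l (ω.1, 1)) Filter.atTop ∧
      ∀ ω : G₁ × G₂, l (ω.1, 1) = 0 ↔ ω ∈ {p : G₁ × G₂ | p.1 = 1}) ∧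
    (∀ ε > (0 : ℝ), ∃ N : ℕ, ∀ n ≥ N, ∀ ω₁ : G₁, ω₁ ≠ 1 →
      |l (ω₁, 1) / sInf ((fun ω₂ : G₂ => ln n (ω₁, ω₂)) '' Set.univ) - 1| ≤ ε) := by
  have hl1 : l 1 = 0 := (hzero 1).2 rfl
  have hpos : ∀ ω : G₁ × G₂, 0 ≤ l ω := by
    intro ω
    have h := hsub ω ω⁻¹
    rw [mul_inv_cancel, hl1, hinv] at h
    linarith
  have ha : ∀ n : ℕ, 0 < 1 / ((n : ℝ) + 1) := by
    intro n; positivity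
  have ha1 : ∀ n : ℕ, 1 / ((n : ℝ) + 1) ≤ 1 := by
    intro n
    rw [div_le_one (by positivity)]
    linarith [Nat.cast_nonneg (α := ℝ) n]
  refine ⟨?_, ⟨?_, ?_⟩, ?_⟩
  · intro n
    refine ⟨?_, ?_, ?_, ?_⟩
    · have heq : ln n = fun ω : G₁ × G₂ => (1 / (n + 1 : ℝ)) * l ω +
          (1 - 1 / (n + 1 : ℝ)) * l (ω.1, 1) := funext (hln n)
      rw [heq]
      exact ((continuous_const.mul hlcont).add (continuous_const.mul
        (hlcont.comp (continuous_fst.prodMk continuous_const))))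
    · intro ω
      rw [hln]
      constructor
      · intro h
        have h1 : 0 ≤ l (ω.1, 1) := hpos _
        have h2 : 0 ≤ l ω := hpos _
        have h3 := ha n
        have h4 := ha1 n
        have h5 : l ω = 0 := by nlinarith
        exact (hzero ω).1 h5
      · intro h
        subst h
        have : ((1 : G₁ × G₂).1, (1 : G₂)) = (1 : G₁ × G₂) := rfl
        rw [this, hl1]
        ring
    · intro ω
      rw [hln, hln]
      have h1 : l ω⁻¹ = l ω := hinv ω
      have h2 : l ((ω⁻¹).1, 1) = l (ω.1, 1) := by
        have : ((ω⁻¹).1, (1 : G₂)) = ((ω.1, (1:G₂)) : G₁ × G₂)⁻¹ := by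
          simp [Prod.ext_iff]
        rw [this, hinv]
      rw [h1, h2]
    · intro ω ω'
      rw [hln, hln, hln]
      have h1 : l (ω * ω') ≤ l ω + l ω' := hsub ω ω'
      have h2 : l ((ω * ω').1, 1) ≤ l (ω.1, 1) + l (ω'.1, 1) := by
        have : (((ω * ω').1, (1:G₂)) : G₁ × G₂) = (ω.1, 1) * (ω'.1, 1) := by
          simp [Prod.ext_iff]
        rw [this]; exact hsub _ _
      have h3 := ha n
      have h4 := ha1 n
      nlinarith
  · -- uniform convergence
    obtain ⟨x, -, hx'⟩ := isCompact_univ.exists_isMaxOn ⟨1, trivial⟩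
      hlcont.abs.continuousOn
    have hx : ∀ y : G₁ × G₂, |l y| ≤ |l x| := fun y => hx' trivial
    set M := |l x| with hM
    rw [Metric.tendstoUniformly_iff]
    intro ε hε
    have ht : Filter.Tendsto (fun n : ℕ => (2 * M) * (1 / ((n : ℝ) + 1)))
        Filter.atTop (nhds 0) := by
      simpa using tendsto_one_div_add_atTop_nhds_zero_nat.const_mul (2 * M)
    filter_upwards [ht.eventually (gt_mem_nhds hε)] with n hn ω
    rw [Real.dist_eq, hln]
    have hb1 : |l ω| ≤ M := hx ω
    have hb2 : |l (ω.1, 1)| ≤ M := hx _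
    have h3 := ha n
    have heq : l (ω.1, 1) - (1 / ((n:ℝ) + 1) * l ω + (1 - 1 / ((n:ℝ)+1)) * l (ω.1, 1))
        = (1 / ((n:ℝ)+1)) * (l (ω.1,1) - l ω) := by ring
    rw [heq, abs_mul, abs_of_pos h3]
    calc 1 / ((n:ℝ)+1) * |l (ω.1,1) - l ω| ≤ 1 / ((n:ℝ)+1) * (2*M) := by
          have := abs_sub_abs_le_abs_sub (l (ω.1,1)) (l ω)
          have h5 := abs_sub (l (ω.1,1)) (l ω)
          have : |l (ω.1,1) - l ω| ≤ 2 * M := by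
            calc |l (ω.1,1) - l ω| ≤ |l (ω.1,1)| + |l ω| := abs_sub _ _
            _ ≤ 2 * M := by linarith
          nlinarith
      _ < ε := by rw [mul_comm] at hn; linarith [hn]
  · intro ω
    simp only [Set.mem_setOf_eq]
    rw [hzero]
    constructor
    · intro h; exact congrArg Prod.fst h
    · intro h; rw [h]; rfl
  · -- part iii
    intro ε hε
    obtain ⟨k, hk⟩ := exists_nat_one_div_lt hε
    refine ⟨k + 1, fun n hn ω₁ hω₁ => ?_⟩
    have hn1 : 1 ≤ n := le_trans (Nat.le_add_left 1 k) hn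
    set a := 1 / ((n : ℝ) + 1) with haa
    have h3 : 0 < a := ha n
    have hnr : (1 : ℝ) ≤ (n : ℝ) := by exact_mod_cast hn1
    have h4 : a < 1 := by
      rw [haa, div_lt_one (by positivity)]; linarith
    set L := l (ω₁, 1) with hL
    have hLpos : 0 < L := by
      rcases lt_or_eq_of_le (hpos (ω₁, 1)) with h | h
      · exact h
      · exfalso; apply hω₁
        have := (hzero (ω₁, 1)).1 h.symm
        exact congrArg Prod.fst this
    set S := (fun ω₂ : G₂ => ln n (ω₁, ω₂)) '' Set.univ with hS
    have hSne : S.Nonempty := ⟨ln n (ω₁, 1), ⟨1, trivial, rfl⟩⟩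
    have hlow : ∀ x ∈ S, (1 - a) * L ≤ x := by
      rintro x ⟨ω₂, -, rfl⟩
      show (1 - a) * L ≤ ln n (ω₁, ω₂)
      rw [hln]
      have h0 := hpos (ω₁, ω₂)
      have h1 : ((ω₁, ω₂).1, (1:G₂)) = ((ω₁, (1:G₂)) : G₁ × G₂) := rfl
      rw [h1]
      nlinarith
    have hbdd : BddBelow S := ⟨(1 - a) * L, hlow⟩
    have hinf_low : (1 - a) * L ≤ sInf S := le_csInf hSne hlow
    have hinf_up : sInf S ≤ L := by
      have hmem : ln n (ω₁, 1) ∈ S := ⟨1, trivial, rfl⟩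
      have : ln n (ω₁, 1) = L := by
        have h1 : (((ω₁,(1:G₂)) : G₁ × G₂).1, (1:G₂)) = ((ω₁, (1:G₂)) : G₁ × G₂) := rfl
        rw [hln, h1]; ring
      calc sInf S ≤ ln n (ω₁, 1) := csInf_le hbdd hmem
        _ = L := this
    have hinfpos : 0 < sInf S := lt_of_lt_of_le (by nlinarith) hinf_low
    have h1 : 1 ≤ L / sInf S := (one_le_div hinfpos).2 hinf_up
    rw [abs_of_nonneg (by linarith)]
    have h2 : L / sInf S ≤ L / ((1 - a) * L) :=
      div_le_div_of_nonneg_left (le_of_lt hLpos) (by nlinarith) hinf_low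
    have h5 : L / ((1 - a) * L) = 1 / (1 - a) := by
      rw [mul_comm, ← div_div, div_self (ne_of_gt hLpos)]
    have h6 : 1 / (1 - a) - 1 ≤ ε := by
      have hna : 1 - a = (n : ℝ) / ((n : ℝ) + 1) := by
        rw [haa]; field_simp; ring
      rw [hna]
      have : 1 / ((n:ℝ) / ((n:ℝ)+1)) = ((n:ℝ)+1)/(n:ℝ) := one_div_div _ _
      rw [this]
      have hne : (0:ℝ) < (n:ℝ) := by linarith
      have heq : ((n:ℝ)+1)/(n:ℝ) - 1 = 1 / (n:ℝ) := by field_simp; ring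
      rw [heq]
      have hkn : (k : ℝ) + 1 ≤ (n : ℝ) := by
        have : (k + 1 : ℕ) ≤ n := hn
        exact_mod_cast this
      have : 1 / (n : ℝ) ≤ 1 / ((k:ℝ) + 1) :=
        one_div_le_one_div_of_le (by positivity) hkn
      linarith
    linarith
end
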